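/- arXiv:2507.16599 — 4 statements merged into one kernel-verified Lean document; each statement's English description precedes it below -/
import Mathlib

section
/- For every real number R > 0 and every dimension d ≥ 2, there exists λ ∈ [R-1, R+1] with λ² ∈ ℕ such that the number of lattice points k ∈ ℤ^d with |k| = λ is at least c_d · λ^{d-2} for a constant c_d > 0 depending only on d. -/
lemma aux_nat_div_lt (a b : ℕ) (hb : 0 < b) : a < (a / b + 1) * b := by
  have h1 := Nat.div_add_mod a b
  have h2 := Nat.mod_lt a hb
  nlinarith

lemma aux_sol_finite (d : ℕ) (m : ℤ) :
    Finite {k : Fin d → ℤ // ∑ i, (k i) ^ 2 = m} := by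
  have hsub : {k : Fin d → ℤ | ∑ i, (k i) ^ 2 = m} ⊆
      Set.univ.pi (fun _ => Set.Icc (-m) m) := by
    intro k hk i _
    simp only [Set.mem_setOf_eq] at hk
    have h1 : (k i) ^ 2 ≤ m := by
      rw [← hk]
      exact Finset.single_le_sum (fun j _ => sq_nonneg (k j)) (Finset.mem_univ i)
    have h2 : |k i| ≤ (k i) ^ 2 := by
      rcases eq_or_ne (k i) 0 with h | h
      · simp [h]
      · have h3 : 1 ≤ |k i| := Int.one_le_abs h
        nlinarith [sq_abs (k i)]
    have := abs_le.mp (h2.trans h1)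
    exact Set.mem_Icc.mpr this
  have hfin : {k : Fin d → ℤ | ∑ i, (k i) ^ 2 = m}.Finite :=
    Set.Finite.subset (Set.Finite.pi (fun _ => Set.finite_Icc _ _)) hsub
  exact hfin.to_subtype


lemma aux_numeric (e : ℕ) (D N M n₀ lam c : ℝ)
    (hDval : D = (e:ℝ) + 2)
    (hN1 : 1 ≤ N)
    (hBnN : 6 * (2 * D) ^ (e + 1) ≤ N)
    (he : 1 ≤ e)
    (hlamnn : 0 ≤ lam) (hlam2N : lam ≤ 2 * N)
    (hcnn : 0 ≤ c)
    (hc : c ≤ 1 / (6 * (2 * D) ^ (e + 1) * 2 ^ e))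
    (hM : N / D < M + 1) (hM0 : 0 ≤ M)
    (hn₀ : (M + 1) ^ (e + 1) / (2 * N + 1) < n₀ + 1) :
    c * lam ^ e ≤ n₀ := by
  have hD2 : (2:ℝ) ≤ D := by
    have h0 : (0:ℝ) ≤ (e:ℝ) := Nat.cast_nonneg e
    rw [hDval]; linarith
  have hDpos : (0:ℝ) < D := by linarith
  set P : ℝ := D ^ (e + 1) with hP
  have hPpos : 0 < P := by positivity
  have hP1 : (1:ℝ) ≤ P := by
    calc (1:ℝ) = 1 ^ (e + 1) := by norm_num
      _ ≤ D ^ (e + 1) := pow_le_pow_left₀ zero_le_one (by linarith) _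
  have hQ : (4:ℝ) ≤ 2 ^ (e + 1) := by
    calc (4:ℝ) = 2 ^ 2 := by norm_num
      _ ≤ 2 ^ (e + 1) := pow_le_pow_right₀ (by norm_num) (by omega)
  have hBval : 6 * (2 * D) ^ (e + 1) = 6 * (2 ^ (e + 1) * P) := by
    rw [hP, mul_pow]
  have hNe : N ≤ N ^ e := by
    calc N = N ^ 1 := (pow_one _).symm
      _ ≤ N ^ e := pow_le_pow_right₀ hN1 (by omega)
  have hx : 6 * (2 ^ (e + 1) * P) ≤ N ^ e := by
    rw [← hBval]; linarith
  have hxpos : (0:ℝ) < N ^ e := by positivity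
  have hNpos : (0:ℝ) < N := by linarith
  have step1 : c * lam ^ e ≤ N ^ e / (6 * (2 ^ (e + 1) * P)) := by
    have h1 : lam ^ e ≤ (2 * N) ^ e := pow_le_pow_left₀ hlamnn hlam2N e
    calc c * lam ^ e ≤ (1 / (6 * (2 * D) ^ (e + 1) * 2 ^ e)) * (2 * N) ^ e :=
          mul_le_mul hc h1 (by positivity) (by positivity)
      _ = N ^ e / (6 * (2 ^ (e + 1) * P)) := by
          rw [hBval, mul_pow]
          field_simp
  have hchain : N ^ e / (3 * P) ≤ (M + 1) ^ (e + 1) / (2 * N + 1) := by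
    have hb3 : 2 * N + 1 ≤ 3 * N := by linarith
    have hA : (N / D) ^ (e + 1) ≤ (M + 1) ^ (e + 1) :=
      pow_le_pow_left₀ (by positivity) hM.le _
    calc N ^ e / (3 * P) = (N / D) ^ (e + 1) / (3 * N) := by
          rw [hP, div_pow, pow_succ]
          field_simp
          ring
      _ ≤ (M + 1) ^ (e + 1) / (2 * N + 1) :=
          div_le_div₀ (by positivity) hA (by linarith) hb3
  have hkey : N ^ e / (6 * (2 ^ (e + 1) * P)) + 1 ≤ N ^ e / (3 * P) := by
    have hid : N ^ e / (3 * P) = N ^ e / (12 * P) + N ^ e / (4 * P) := by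
      field_simp
      ring
    have h1 : N ^ e / (6 * (2 ^ (e + 1) * P)) ≤ N ^ e / (12 * P) := by
      apply div_le_div_of_nonneg_left hxpos.le (by positivity)
      nlinarith
    have h2 : (1:ℝ) ≤ N ^ e / (4 * P) := by
      rw [le_div_iff₀ (by positivity)]
      nlinarith
    linarith
  linarith

/-- For every `R > 0` and dimension `d ≥ 2`, there exists `λ ∈ [R-1, R+1]` with `λ² ∈ ℕ`
such that the number of lattice points on the sphere of radius `λ` in `ℤ^d` is
at least `c_d · λ^{d-2}` for a constant `c_d > 0` depending only on `d`. -/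
theorem stmt_0 (d : ℕ) (hd : 2 ≤ d) :
    ∃ c : ℝ, 0 < c ∧ ∀ R : ℝ, 0 < R →
      ∃ lam : ℝ, lam ∈ Set.Icc (R - 1) (R + 1) ∧
        ∃ m : ℕ, lam ^ 2 = (m : ℝ) ∧
          c * lam ^ (d - 2) ≤
            (Nat.card {k : Fin d → ℤ // ∑ i, (k i) ^ 2 = (m : ℤ)} : ℝ) := by
  obtain ⟨e, rfl⟩ : ∃ e, d = e + 2 := ⟨d - 2, by omega⟩
  simp only [Nat.add_sub_cancel]
  set D : ℕ := e + 2 with hD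
  set Bn : ℕ := 6 * (2 * D) ^ (e + 1) with hBn
  have hBn1 : 1 ≤ Bn := by
    have h : 0 < 2 * D := by omega
    have := Nat.one_le_two_pow (n := e + 1)
    have h2 : 0 < (2 * D) ^ (e + 1) := Nat.pow_pos h
    omega
  have hBpos : (0:ℝ) < (Bn:ℝ) := by positivity
  set c : ℝ := min (1 / ((Bn:ℝ) * 2 ^ e)) (1 / (Bn:ℝ) ^ e) with hc
  have hcpos : 0 < c := by
    apply lt_min <;> positivity
  refine ⟨c, hcpos, ?_⟩
  intro R hR
  by_cases hcase : R ≤ (Bn:ℝ) ∨ e = 0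
  · -- trivial branch: lam = ⌊R⌋₊
    set n : ℕ := ⌊R⌋₊ with hn
    refine ⟨(n:ℝ), ⟨(Nat.sub_one_lt_floor R).le, (Nat.floor_le hR.le).trans (by linarith)⟩,
      n ^ 2, by push_cast; ring, ?_⟩
    have hfin := aux_sol_finite (e + 2) ((n ^ 2 : ℕ) : ℤ)
    have hne : Nonempty {k : Fin (e + 2) → ℤ // ∑ i, (k i) ^ 2 = ((n ^ 2 : ℕ) : ℤ)} := by
      refine ⟨⟨Fin.cons ((n : ℤ)) (fun _ => 0), ?_⟩⟩
      have : ∑ i : Fin (e + 2), (Fin.cons ((n:ℤ)) (fun _ => (0:ℤ)) i) ^ 2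
          = (n:ℤ) ^ 2 + ∑ _i : Fin (e + 1), (0:ℤ) := by
        rw [Fin.sum_univ_succ]
        simp
      rw [this]
      simp
    have hcard : 1 ≤ (Nat.card {k : Fin (e + 2) → ℤ // ∑ i, (k i) ^ 2 = ((n ^ 2 : ℕ) : ℤ)} : ℝ) := by
      exact_mod_cast Nat.card_pos
    refine le_trans ?_ hcard
    rcases hcase with hRB | he0
    · have hnB : (n:ℝ) ≤ (Bn:ℝ) := (Nat.floor_le hR.le).trans hRB
      have h1 : (n:ℝ) ^ e ≤ (Bn:ℝ) ^ e := pow_le_pow_left₀ (by positivity) hnB e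
      have h2 : c ≤ 1 / (Bn:ℝ) ^ e := min_le_right _ _
      calc c * (n:ℝ) ^ e ≤ (1 / (Bn:ℝ) ^ e) * (Bn:ℝ) ^ e := by
            apply mul_le_mul h2 h1 (by positivity) (by positivity)
        _ = 1 := by field_simp
    · subst he0
      have h2 : c ≤ 1 / (Bn:ℝ) ^ 0 := min_le_right _ _
      simpa using h2
  · -- main branch: pigeonhole
    push_neg at hcase
    obtain ⟨hRB, he0⟩ := hcase
    set N : ℕ := ⌊R⌋₊ with hNdef
    have hNle : (N:ℝ) ≤ R := Nat.floor_le hR.le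
    have hNgt : R - 1 < (N:ℝ) := Nat.sub_one_lt_floor R
    have hRN1 : R < (N:ℝ) + 1 := Nat.lt_floor_add_one R
    have hBnN : Bn ≤ N := by
      have : (Bn:ℝ) < (N:ℝ) + 1 := lt_trans hRB hRN1
      have : Bn < N + 1 := by exact_mod_cast this
      omega
    have hN1 : 1 ≤ N := le_trans hBn1 hBnN
    set M : ℕ := N / D with hM
    have hDpos : 0 < D := by omega
    have hMD : M * D ≤ N := Nat.div_mul_le_self N D
    -- sum of squares of a tuple
    set s : (Fin (e + 1) → Fin (M + 1)) → ℕ := fun v => ∑ i, ((v i : ℕ)) ^ 2 with hs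
    have hsle : ∀ v, s v ≤ N ^ 2 := by
      intro v
      have h1 : s v ≤ (e + 1) * M ^ 2 := by
        calc s v ≤ (Finset.univ : Finset (Fin (e+1))).card • (M ^ 2) := by
              apply Finset.sum_le_card_nsmul
              intro i _
              have : (v i : ℕ) ≤ M := Nat.lt_succ_iff.mp (v i).isLt
              exact Nat.pow_le_pow_left this 2
          _ = (e + 1) * M ^ 2 := by simp [mul_comm]
      have hMN : M ≤ N := Nat.div_le_self N D
      nlinarith
    set a : (Fin (e + 1) → Fin (M + 1)) → ℕ := fun v => Nat.sqrt (N ^ 2 - s v) with ha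
    set f : (Fin (e + 1) → Fin (M + 1)) → ℕ := fun v => (a v + 1) ^ 2 + s v with hf
    have hflo : ∀ v, N ^ 2 < f v := by
      intro v
      have h1 : N ^ 2 - s v < (a v + 1) ^ 2 := by
        have := Nat.lt_succ_sqrt (N ^ 2 - s v)
        simpa [ha, pow_two, Nat.succ_eq_add_one] using this
      have h2 := hsle v
      have := (Nat.sub_lt_iff_lt_add h2).mp h1
      simp only [hf]
      omega
    have hfhi : ∀ v, f v ≤ (N + 1) ^ 2 := by
      intro v
      have h1 : (a v) ^ 2 ≤ N ^ 2 - s v := Nat.sqrt_le' _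
      have h2 := hsle v
      have h3 : (a v) ^ 2 + s v ≤ N ^ 2 := by
        have := (Nat.le_sub_iff_add_le h2).mp h1
        omega
      have h4 : a v ≤ N := by
        nlinarith [Nat.zero_le (s v)]
      simp only [hf]
      nlinarith
    set T : Finset ℕ := Finset.Icc (N ^ 2 + 1) ((N + 1) ^ 2) with hT
    have hTcard : T.card = 2 * N + 1 := by
      rw [hT, Nat.card_Icc]
      have : (N + 1) ^ 2 = N ^ 2 + 2 * N + 1 := by ring
      omega
    set n₀ : ℕ := (M + 1) ^ (e + 1) / (2 * N + 1) with hn₀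
    have hmaps : ∀ v ∈ (Finset.univ : Finset (Fin (e + 1) → Fin (M + 1))), f v ∈ T := by
      intro v _
      exact Finset.mem_Icc.mpr ⟨hflo v, hfhi v⟩
    have hTne : T.Nonempty := by
      refine ⟨N ^ 2 + 1, Finset.mem_Icc.mpr ⟨le_refl _, ?_⟩⟩
      nlinarith
    have hmul : T.card * n₀ ≤ (Finset.univ : Finset (Fin (e + 1) → Fin (M + 1))).card := by
      rw [hTcard, Finset.card_univ]
      have : Fintype.card (Fin (e + 1) → Fin (M + 1)) = (M + 1) ^ (e + 1) := by
        simp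
      rw [this, mul_comm]
      exact Nat.div_mul_le_self _ _
    obtain ⟨m, hmT, hfib⟩ :=
      Finset.exists_le_card_fiber_of_mul_le_card_of_maps_to hmaps hTne hmul
    obtain ⟨hmlo, hmhi⟩ := Finset.mem_Icc.mp hmT
    -- lam
    set lam : ℝ := Real.sqrt m with hlam
    have hmpos : (0:ℝ) ≤ (m:ℝ) := by positivity
    have hlam2 : lam ^ 2 = (m:ℝ) := Real.sq_sqrt hmpos
    have hlamlo : (N:ℝ) ≤ lam := by
      have h1 : ((N:ℝ)) ^ 2 ≤ (m:ℝ) := by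
        have : N ^ 2 ≤ m := by omega
        exact_mod_cast this
      have := Real.sqrt_le_sqrt h1
      rwa [Real.sqrt_sq (by positivity)] at this
    have hlamhi : lam ≤ (N:ℝ) + 1 := by
      have h1 : (m:ℝ) ≤ ((N:ℝ) + 1) ^ 2 := by exact_mod_cast hmhi
      have := Real.sqrt_le_sqrt h1
      rwa [Real.sqrt_sq (by positivity)] at this
    refine ⟨lam, ⟨le_trans hNgt.le hlamlo, le_trans hlamhi (by linarith)⟩, m, hlam2, ?_⟩
    -- injection from fiber into solution set
    have hfin := aux_sol_finite (e + 2) ((m : ℕ) : ℤ)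
    set fib := Finset.filter (fun v => f v = m) (Finset.univ : Finset (Fin (e + 1) → Fin (M + 1)))
      with hfib_def
    have hinj : ∃ g : {v // v ∈ fib} → {k : Fin (e + 2) → ℤ // ∑ i, (k i) ^ 2 = ((m:ℕ) : ℤ)},
        Function.Injective g := by
      refine ⟨fun ⟨v, hv⟩ => ⟨Fin.cons ((a v : ℤ) + 1) (fun i => ((v i : ℕ) : ℤ)), ?_⟩, ?_⟩
      · have hvm : f v = m := (Finset.mem_filter.mp hv).2
        have : ∑ i : Fin (e + 2), (Fin.cons ((a v : ℤ) + 1) (fun i => ((v i : ℕ) : ℤ)) i) ^ 2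
            = ((a v : ℤ) + 1) ^ 2 + ∑ i : Fin (e + 1), ((v i : ℕ) : ℤ) ^ 2 := by
          rw [Fin.sum_univ_succ]
          simp
        rw [this, ← hvm]
        simp only [hf, hs]
        push_cast
        ring
      · rintro ⟨v₁, h₁⟩ ⟨v₂, h₂⟩ hgv
        simp only [Subtype.mk.injEq] at hgv
        apply Subtype.ext
        funext i
        have := congrFun hgv (Fin.succ i)
        simp only [Fin.cons_succ] at this
        have : ((v₁ i : ℕ)) = ((v₂ i : ℕ)) := by exact_mod_cast this
        exact Fin.ext this
    obtain ⟨g, hg⟩ := hinj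
    have hcount : (n₀ : ℝ) ≤
        (Nat.card {k : Fin (e + 2) → ℤ // ∑ i, (k i) ^ 2 = ((m:ℕ) : ℤ)} : ℝ) := by
      have h1 : n₀ ≤ Nat.card {v // v ∈ fib} := by
        rw [Nat.card_eq_finsetCard]
        exact hfib
      have h2 := Nat.card_le_card_of_injective g hg
      exact_mod_cast le_trans h1 h2
    refine le_trans ?_ hcount
    -- numeric bound via aux_numeric
    have hN1R : (1:ℝ) ≤ (N:ℝ) := by exact_mod_cast hN1
    have hDposR : (0:ℝ) < (D:ℝ) := by exact_mod_cast hDpos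
    have hlamnn : 0 ≤ lam := Real.sqrt_nonneg _
    have hlam2N : lam ≤ 2 * (N:ℝ) := by linarith
    have hBnNR : 6 * (2 * (D:ℝ)) ^ (e + 1) ≤ (N:ℝ) := by
      have h1 : (Bn:ℝ) ≤ (N:ℝ) := by exact_mod_cast hBnN
      have h2 : (Bn:ℝ) = 6 * (2 * (D:ℝ)) ^ (e + 1) := by
        rw [hBn]; push_cast; ring
      linarith [h2 ▸ h1]
    have hcR : c ≤ 1 / (6 * (2 * (D:ℝ)) ^ (e + 1) * 2 ^ e) := by
      have h2 : (Bn:ℝ) = 6 * (2 * (D:ℝ)) ^ (e + 1) := by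
        rw [hBn]; push_cast; ring
      have h3 : c ≤ 1 / ((Bn:ℝ) * 2 ^ e) := min_le_left _ _
      rw [h2] at h3
      exact h3
    have hMlt : (N:ℝ) / (D:ℝ) < (M:ℝ) + 1 := by
      have h := aux_nat_div_lt N D hDpos
      have h' : (N:ℝ) < ((M:ℝ) + 1) * (D:ℝ) := by exact_mod_cast h
      rw [div_lt_iff₀ hDposR]
      linarith
    have hDval : (D:ℝ) = (e:ℝ) + 2 := by rw [hD]; push_cast; ring
    have hb : (0:ℝ) < 2 * (N:ℝ) + 1 := by linarith
    have hdivlb : (((M:ℝ) + 1) ^ (e + 1)) / (2 * (N:ℝ) + 1) < (n₀ : ℝ) + 1 := by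
      have h := aux_nat_div_lt ((M + 1) ^ (e + 1)) (2 * N + 1) (by omega)
      have h' : (((M:ℝ) + 1) ^ (e + 1)) < ((n₀:ℝ) + 1) * (2 * (N:ℝ) + 1) := by
        exact_mod_cast h
      rw [div_lt_iff₀ hb]
      exact h'
    exact aux_numeric e (D:ℝ) (N:ℝ) (M:ℝ) (n₀:ℝ) lam c hDval hN1R hBnNR
      (by omega) hlamnn hlam2N hcpos.le hcR hMlt (by positivity) hdivlb
end

section
/- Let d ≥ 3 and let S = {x ∈ 𝕋^d : x₁ = x₂ = 0}. Then the trace inequality fails for every probability measure μ with supp μ ⊆ S: there is no constant C such that ∫|u|² dμ ≤ C ∫|u|² dx for all Laplace eigenfunctions u on 𝕋^d. -/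
open MeasureTheory Complex

/-- The character `x ↦ e^{2πi k·x}` on the torus `𝕋^d = (ℝ/ℤ)^d`. -/
noncomputable def torusChar {d : ℕ} (k : Fin d → ℤ) (x : Fin d → AddCircle (1:ℝ)) : ℂ :=
  ∏ i, fourier (k i) (x i)

/-- The set of lattice points `k ∈ ℤ^d` with `|k|² = n`. -/
noncomputable def sphereFinset (d n : ℕ) : Finset (Fin d → ℤ) :=
  Finset.filter (fun k => ∑ i, (k i)^2 = (n : ℤ))
    (Finset.Icc (fun _ => -(n : ℤ)) (fun _ => (n : ℤ)))

/-- A Laplace eigenfunction on `𝕋^d` with eigenvalue `-4π²n`: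
a trigonometric polynomial with frequencies on the sphere `|k|² = n`. -/
noncomputable def eigenfun {d : ℕ} (n : ℕ) (c : (Fin d → ℤ) → ℂ)
    (x : Fin d → AddCircle (1:ℝ)) : ℂ :=
  ∑ k ∈ sphereFinset d n, c k * torusChar k x

/-- The Fourier coefficient `μ̂(k) = ∫ e^{-2πi k·x} dμ(x)` of a measure on the torus. -/
noncomputable def fourierCoeff' {d : ℕ} (μ : Measure (Fin d → AddCircle (1:ℝ)))
    (k : Fin d → ℤ) : ℂ :=
  ∫ x, (starRingEnd ℂ) (torusChar k x) ∂μ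

/-! ### Auxiliary facts about Gaussian integers -/

abbrev TraceIneq.ga : GaussianInt := ⟨2, 1⟩
abbrev TraceIneq.gb : GaussianInt := ⟨2, -1⟩

namespace TraceIneq

lemma norm_ga : ga.norm = 5 := by decide
lemma norm_gb : gb.norm = 5 := by decide

lemma prime_of_norm_prime (z : GaussianInt) (h : Prime z.norm) : Prime z := by
  rw [← UniqueFactorizationMonoid.irreducible_iff_prime]
  constructor
  · intro hu
    exact h.not_unit (by
      rw [Int.isUnit_iff_natAbs_eq, Zsqrtd.norm_eq_one_iff]; exact hu)
  · intro p q hpq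
    have hn : z.norm = p.norm * q.norm := by rw [hpq, Zsqrtd.norm_mul]
    rcases h.irreducible.isUnit_or_isUnit hn with h1 | h1 <;>
      [left; right] <;>
      rwa [← Zsqrtd.norm_eq_one_iff, ← Int.isUnit_iff_natAbs_eq]

lemma prime_ga : Prime ga := prime_of_norm_prime _ (by rw [norm_ga]; norm_num)

lemma ga_not_dvd_gb : ¬ ga ∣ gb := by
  rintro ⟨c, hc⟩
  have hn : (5 : ℤ) = 5 * c.norm := by
    have := congrArg Zsqrtd.norm hc
    rwa [Zsqrtd.norm_mul, norm_ga, norm_gb] at this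
  have hc1 : c.norm = 1 := by linarith
  have : c.re * c.re + c.im * c.im = 1 := by
    have := hc1
    simp [Zsqrtd.norm_def] at this
    linarith
  have hreb : -1 ≤ c.re ∧ c.re ≤ 1 := by
    constructor <;> nlinarith [sq_nonneg c.im, sq_nonneg (c.re - 1), sq_nonneg (c.re + 1)]
  have himb : -1 ≤ c.im ∧ c.im ≤ 1 := by
    constructor <;> nlinarith [sq_nonneg c.re, sq_nonneg (c.im - 1), sq_nonneg (c.im + 1)]
  have hre : c.re = 1 ∨ c.re = -1 ∨ c.re = 0 := by omega
  have him : c.im = 1 ∨ c.im = -1 ∨ c.im = 0 := by omega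
  have hre2 := congrArg Zsqrtd.re hc
  have him2 := congrArg Zsqrtd.im hc
  simp [Zsqrtd.re_mul, Zsqrtd.im_mul] at hre2 him2
  rcases hre with h1|h1|h1 <;> rcases him with h2|h2|h2 <;>
    rw [h1, h2] at hre2 him2 <;> omega

lemma gpow_ne (t : ℕ) (ht : t ≠ 0) : ga ^ t ≠ gb ^ t := by
  intro h
  exact ga_not_dvd_gb (prime_ga.dvd_of_dvd_pow (h ▸ dvd_pow_self ga ht))

lemma gnorm {m j : ℕ} (hj : j ≤ m) : (ga ^ j * gb ^ (m - j)).norm = 5 ^ m := by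
  have h1 : ∀ (z : GaussianInt) (p : ℕ), (z ^ p).norm = z.norm ^ p := fun z p =>
    map_pow (Zsqrtd.normMonoidHom) z p
  rw [Zsqrtd.norm_mul, h1, h1, norm_ga, norm_gb, ← pow_add, Nat.add_sub_cancel' hj]

lemma ginj {m j j' : ℕ} (hj : j ≤ m) (hj' : j' ≤ m)
    (h : ga ^ j * gb ^ (m - j) = ga ^ j' * gb ^ (m - j')) : j = j' := by
  by_contra hne
  wlog hlt : j < j' generalizing j j'
  · exact this hj' hj h.symm (Ne.symm hne) (by omega)
  obtain ⟨t, ht, rfl⟩ : ∃ t, t ≠ 0 ∧ j' = j + t := ⟨j' - j, by omega, by omega⟩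
  have hga : ga ≠ 0 := by decide
  have hgb : gb ≠ 0 := by decide
  have e1 : ga ^ j * (gb ^ (m - (j + t)) * gb ^ t) = ga ^ j * (ga ^ t * gb ^ (m - (j + t))) := by
    rw [← pow_add, show m - (j + t) + t = m - j by omega, h, pow_add]; ring
  have e2 := mul_left_cancel₀ (pow_ne_zero j hga) e1
  rw [mul_comm (ga ^ t)] at e2
  have e3 := mul_left_cancel₀ (pow_ne_zero (m - (j + t)) hgb) e2
  exact gpow_ne t ht e3.symm

/-! ### Analytic facts -/

lemma integral_fourier_single (n : ℤ) :
    ∫ x : AddCircle (1:ℝ), fourier n x = if n = 0 then 1 else 0 := by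
  split_ifs with h
  · subst h
    simp only [fourier_zero]
    simp [Measure.real, AddCircle.measure_univ]
  · exact integral_eq_zero_of_add_right_eq_neg
      (fourier_add_half_inv_index h one_pos)

lemma torusChar_continuous {d : ℕ} (k : Fin d → ℤ) : Continuous (torusChar k) := by
  unfold torusChar
  exact continuous_finset_prod _ fun i _ =>
    (map_continuous (fourier (k i))).comp (continuous_apply i)

instance : IsProbabilityMeasure (volume : Measure (AddCircle (1:ℝ))) :=
  ⟨by simp [AddCircle.measure_univ]⟩

lemma torusChar_orth {d : ℕ} (k l : Fin d → ℤ) :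
    ∫ x : Fin d → AddCircle (1:ℝ), torusChar k x * (starRingEnd ℂ) (torusChar l x)
      = if k = l then 1 else 0 := by
  have key : ∀ x : Fin d → AddCircle (1:ℝ),
      torusChar k x * (starRingEnd ℂ) (torusChar l x)
        = ∏ i, fourier (k i - l i) (x i) := by
    intro x
    unfold torusChar
    rw [map_prod, ← Finset.prod_mul_distrib]
    refine Finset.prod_congr rfl fun i _ => ?_
    rw [← fourier_neg, ← fourier_add, sub_eq_add_neg]
  simp_rw [key]
  rw [volume_pi, MeasureTheory.integral_fintype_prod_eq_prod (ι := Fin d)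
    (fun i (y : AddCircle (1:ℝ)) => fourier (k i - l i) y)]
  simp_rw [integral_fourier_single]
  split_ifs with h
  · subst h; simp
  · obtain ⟨i, hi⟩ := Function.ne_iff.mp h
    exact Finset.prod_eq_zero (Finset.mem_univ i) (by simp [sub_eq_zero, hi])

lemma cont_integrable {d : ℕ} {f : (Fin d → AddCircle (1:ℝ)) → ℂ} (hf : Continuous f) :
    Integrable f (volume : Measure (Fin d → AddCircle (1:ℝ))) :=
  hf.integrable_of_hasCompactSupport (HasCompactSupport.of_compactSpace _)

lemma parseval {d : ℕ} (T : Finset (Fin d → ℤ)) :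
    ∫ x : Fin d → AddCircle (1:ℝ), ‖∑ k ∈ T, torusChar k x‖ ^ 2 = T.card := by
  have hre : ∀ x : Fin d → AddCircle (1:ℝ),
      (‖∑ k ∈ T, torusChar k x‖ ^ 2 : ℝ)
        = ((∑ k ∈ T, torusChar k x) * (starRingEnd ℂ) (∑ k ∈ T, torusChar k x)).re := by
    intro x
    rw [Complex.mul_conj, Complex.ofReal_re, Complex.normSq_eq_norm_sq]
  simp_rw [hre]
  have hcont : ∀ k l : Fin d → ℤ,
      Integrable (fun x : Fin d → AddCircle (1:ℝ) =>
        torusChar k x * (starRingEnd ℂ) (torusChar l x)) volume := by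
    intro k l
    exact cont_integrable ((torusChar_continuous k).mul
      (Complex.continuous_conj.comp (torusChar_continuous l)))
  have hint : Integrable (fun x : Fin d → AddCircle (1:ℝ) =>
      (∑ k ∈ T, torusChar k x) * (starRingEnd ℂ) (∑ k ∈ T, torusChar k x)) volume := by
    exact cont_integrable ((continuous_finset_sum _ fun k _ => torusChar_continuous k).mul
      (Complex.continuous_conj.comp (continuous_finset_sum _ fun k _ => torusChar_continuous k)))
  have h2 := integral_re hint
  simp only [RCLike.re_to_complex] at h2
  rw [h2]
  have : (∫ x : Fin d → AddCircle (1:ℝ),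
      (∑ k ∈ T, torusChar k x) * (starRingEnd ℂ) (∑ k ∈ T, torusChar k x)) = (T.card : ℂ) := by
    have expand : ∀ x : Fin d → AddCircle (1:ℝ),
        (∑ k ∈ T, torusChar k x) * (starRingEnd ℂ) (∑ k ∈ T, torusChar k x)
          = ∑ k ∈ T, ∑ l ∈ T, torusChar k x * (starRingEnd ℂ) (torusChar l x) := by
      intro x
      rw [map_sum, Finset.sum_mul_sum]
    simp_rw [expand]
    rw [integral_finset_sum _ (fun k _ => integrable_finset_sum _ (fun l _ => hcont k l))]
    simp_rw [integral_finset_sum _ (fun l _ => hcont _ l), torusChar_orth]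
    simp
  rw [this]
  simp

/-- Embedding a Gaussian integer into `ℤ^d` (first two coordinates). -/
def embPt (d : ℕ) (z : GaussianInt) : Fin d → ℤ :=
  fun i => if (i : ℕ) = 0 then z.re else if (i : ℕ) = 1 then z.im else 0

end TraceIneq

open TraceIneq in
/-- For `d ≥ 3`, the trace inequality fails for every probability measure supported in
the codimension-two subspace `S = {x ∈ 𝕋^d : x₁ = x₂ = 0}`. -/
theorem stmt_9 {d : ℕ} (hd : 3 ≤ d) (μ : Measure (Fin d → AddCircle (1:ℝ)))
    [IsProbabilityMeasure μ]
    (hsupp : μ {x | ¬ (x ⟨0, by omega⟩ = 0 ∧ x ⟨1, by omega⟩ = 0)} = 0) :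
    ¬ ∃ C : ℝ, ∀ (n : ℕ) (c : (Fin d → ℤ) → ℂ),
        ∫ x, ‖eigenfun n c x‖ ^ 2 ∂μ ≤ C * ∫ x, ‖eigenfun n c x‖ ^ 2 := by
  rintro ⟨C, hC⟩
  set i0 : Fin d := ⟨0, by omega⟩ with hi0
  set i1 : Fin d := ⟨1, by omega⟩ with hi1
  have hi01 : i0 ≠ i1 := by simp [hi0, hi1, Fin.ext_iff]
  set m : ℕ := ⌈C⌉₊ with hm
  set T : Finset (Fin d → ℤ) :=
    (Finset.range (m + 1)).image (fun j => embPt d (ga ^ j * gb ^ (m - j))) with hT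
  -- basic coordinate evaluations
  have hemb0 : ∀ z : GaussianInt, embPt d z i0 = z.re := fun z => by simp [embPt, hi0]
  have hemb1 : ∀ z : GaussianInt, embPt d z i1 = z.im := fun z => by simp [embPt, hi1]
  have hembo : ∀ (z : GaussianInt) (i : Fin d), i ≠ i0 → i ≠ i1 → embPt d z i = 0 := by
    intro z i h0 h1
    have : (i : ℕ) ≠ 0 := fun h => h0 (Fin.ext h)
    have : (i : ℕ) ≠ 1 := fun h => h1 (Fin.ext h)
    simp_all [embPt]
  -- cardinality
  have hTcard : T.card = m + 1 := by
    rw [hT, Finset.card_image_of_injOn, Finset.card_range]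
    intro j hj j' hj' h
    have hj2 : j ≤ m := by
      simp only [Finset.coe_range, Set.mem_Iio] at hj; omega
    have hj2' : j' ≤ m := by
      simp only [Finset.coe_range, Set.mem_Iio] at hj'; omega
    refine ginj hj2 hj2' (Zsqrtd.ext_iff.mpr ⟨?_, ?_⟩)
    · exact congrFun h i0
    · exact congrFun h i1
  -- norms of the lattice points
  have hsq : ∀ k ∈ T, (k i0) ^ 2 + (k i1) ^ 2 = (5 : ℤ) ^ m ∧ ∀ i, i ≠ i0 → i ≠ i1 → k i = 0 := by
    intro k hk
    rw [hT, Finset.mem_image] at hk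
    obtain ⟨j, hj, rfl⟩ := hk
    simp only [Finset.mem_range, Nat.lt_succ_iff] at hj
    refine ⟨?_, fun i => hembo _ i⟩
    have := gnorm hj
    rw [Zsqrtd.norm_def] at this
    rw [hemb0, hemb1]
    nlinarith [this]
  -- T is contained in the sphere
  have hTsub : T ⊆ sphereFinset d (5 ^ m) := by
    intro k hk
    obtain ⟨hnorm, hzero⟩ := hsq k hk
    have hsum : ∑ i, (k i) ^ 2 = ((5 ^ m : ℕ) : ℤ) := by
      have key : ∀ i : Fin d, (k i) ^ 2
          = (if i = i0 then (k i0) ^ 2 else 0) + (if i = i1 then (k i1) ^ 2 else 0) := by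
        intro i
        by_cases h0 : i = i0
        · subst h0; rw [if_pos rfl, if_neg hi01, add_zero]
        · by_cases h1 : i = i1
          · subst h1; rw [if_neg h0, if_pos rfl, zero_add]
          · rw [if_neg h0, if_neg h1, hzero i h0 h1]; ring
      rw [Finset.sum_congr rfl fun i _ => key i]
      rw [Finset.sum_add_distrib, Finset.sum_ite_eq' Finset.univ i0,
        Finset.sum_ite_eq' Finset.univ i1]
      simp only [Finset.mem_univ, if_true]
      push_cast
      linarith
    rw [sphereFinset, Finset.mem_filter]
    refine ⟨?_, hsum⟩
    rw [Finset.mem_Icc]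
    constructor <;> (rw [Pi.le_def]; intro i) <;>
    · by_cases h0 : i = i0
      · subst h0; push_cast; nlinarith [sq_nonneg (k i1), sq_nonneg (k i0 - 1), sq_nonneg (k i0 + 1)]
      · by_cases h1 : i = i1
        · subst h1; push_cast; nlinarith [sq_nonneg (k i0), sq_nonneg (k i1 - 1), sq_nonneg (k i1 + 1)]
        · rw [hzero i h0 h1]; push_cast
          linarith [pow_nonneg (by norm_num : (0:ℤ) ≤ 5) m]
  -- the eigenfunction
  set c : (Fin d → ℤ) → ℂ := fun k => if k ∈ T then 1 else 0 with hc
  have heig : ∀ x, eigenfun (5 ^ m) c x = ∑ k ∈ T, torusChar k x := by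
    intro x
    rw [eigenfun]
    simp_rw [hc, ite_mul, one_mul, zero_mul]
    rw [Finset.sum_ite_mem, Finset.inter_eq_right.mpr hTsub]
  -- RHS
  have hRHS : (∫ x, ‖eigenfun (5 ^ m) c x‖ ^ 2 : ℝ) = (m + 1 : ℝ) := by
    simp_rw [heig]
    rw [parseval, hTcard]
    push_cast; ring
  -- LHS
  have hae : ∀ᵐ x ∂μ, x i0 = 0 ∧ x i1 = 0 := by
    rw [MeasureTheory.ae_iff]
    exact hsupp
  have hchar : ∀ x : Fin d → AddCircle (1:ℝ), x i0 = 0 → x i1 = 0 →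
      ∀ k ∈ T, torusChar k x = 1 := by
    intro x h0 h1 k hk
    obtain ⟨-, hzero⟩ := hsq k hk
    rw [torusChar]
    apply Finset.prod_eq_one
    intro i _
    by_cases hI : i = i0
    · subst hI; rw [h0]; exact fourier_eval_zero _
    · by_cases hI' : i = i1
      · subst hI'; rw [h1]; exact fourier_eval_zero _
      · rw [hzero i hI hI']; exact fourier_zero
  have hLHS : (∫ x, ‖eigenfun (5 ^ m) c x‖ ^ 2 ∂μ : ℝ) = ((m + 1 : ℝ)) ^ 2 := by
    have hcongr : ∀ᵐ x ∂μ, ‖eigenfun (5 ^ m) c x‖ ^ 2 = ((m + 1 : ℝ)) ^ 2 := by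
      filter_upwards [hae] with x hx
      rw [heig, Finset.sum_congr rfl (fun k hk => hchar x hx.1 hx.2 k hk),
        Finset.sum_const, hTcard]
      simp only [nsmul_eq_mul, mul_one]
      rw [show ((m + 1 : ℕ) : ℂ) = ((m + 1 : ℝ) : ℂ) by push_cast; ring,
        Complex.norm_real, Real.norm_eq_abs, _root_.abs_of_nonneg (by positivity : (0:ℝ) ≤ (m:ℝ) + 1)]
    rw [integral_congr_ae hcongr, integral_const]
    simp
  -- contradiction
  have hineq := hC (5 ^ m) c
  rw [hLHS, hRHS] at hineq
  have hCm : C < (m : ℝ) + 1 := lt_of_le_of_lt (Nat.le_ceil C) (by rw [hm]; norm_num)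
  nlinarith [hineq, hCm]
end

section
/- Let μ be a Borel probability measure on 𝕋^d whose support is not contained in the zero set of any nonzero trigonometric polynomial, and let r > 0. Then there exist constants 0 < c ≤ C < ∞ (depending on d, μ, r) such that c ‖u‖²_{L²(dx)} ≤ ∫|u|² dμ ≤ C ‖u‖²_{L²(dx)} for all trigonometric polynomials u on 𝕋^d whose Fourier support has diameter at most r. -/
open MeasureTheory Complex

lemma torusChar_cont {d : ℕ} (k : Fin d → ℤ) : Continuous (torusChar k) := by
  unfold torusChar
  exact continuous_finset_prod _ fun i _ => (fourier (k i)).continuous.comp (continuous_apply i)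

lemma cont_integrable {d : ℕ} (ν : Measure (Fin d → AddCircle (1:ℝ))) [IsFiniteMeasure ν]
    {f : (Fin d → AddCircle (1:ℝ)) → ℂ} (hf : Continuous f) : Integrable f ν :=
  hf.integrable_of_hasCompactSupport (HasCompactSupport.of_compactSpace f)

lemma cont_integrable' {d : ℕ} (ν : Measure (Fin d → AddCircle (1:ℝ))) [IsFiniteMeasure ν]
    {f : (Fin d → AddCircle (1:ℝ)) → ℝ} (hf : Continuous f) : Integrable f ν :=
  hf.integrable_of_hasCompactSupport (HasCompactSupport.of_compactSpace f)

lemma expansion {d : ℕ} (ν : Measure (Fin d → AddCircle (1:ℝ))) [IsFiniteMeasure ν]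
    {ι : Type*} [Fintype ι] (κ : ι → (Fin d → ℤ)) (b : ι → ℂ) :
    (∫ x, ‖∑ i, b i * torusChar (κ i) x‖ ^ 2 ∂ν) =
      (∫ x, ∑ i, ∑ j, b i * (starRingEnd ℂ) (b j) *
        (torusChar (κ i) x * (starRingEnd ℂ) (torusChar (κ j) x)) ∂ν).re := by
  have hpt : ∀ x, (‖∑ i, b i * torusChar (κ i) x‖ : ℝ) ^ 2 =
      (∑ i, ∑ j, b i * (starRingEnd ℂ) (b j) *
        (torusChar (κ i) x * (starRingEnd ℂ) (torusChar (κ j) x))).re := by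
    intro x
    rw [show (‖∑ i, b i * torusChar (κ i) x‖:ℝ)^2
        = ((∑ i, b i * torusChar (κ i) x) *
           (starRingEnd ℂ) (∑ j, b j * torusChar (κ j) x)).re by
      rw [Complex.mul_conj]; simp [Complex.sq_norm]]
    congr 1
    rw [map_sum, Finset.sum_mul_sum]
    refine Finset.sum_congr rfl fun i _ => Finset.sum_congr rfl fun j _ => ?_
    rw [map_mul]
    ring
  simp_rw [hpt]
  have hint : ∀ i j : ι, Integrable (fun x =>
      b i * (starRingEnd ℂ) (b j) *
        (torusChar (κ i) x * (starRingEnd ℂ) (torusChar (κ j) x))) ν := by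
    intro i j
    exact cont_integrable ν (by
      exact continuous_const.mul (((torusChar_cont (κ i)).mul
        (Complex.continuous_conj.comp (torusChar_cont (κ j))))))
  have hintsum : Integrable (fun x => ∑ i, ∑ j, b i * (starRingEnd ℂ) (b j) *
      (torusChar (κ i) x * (starRingEnd ℂ) (torusChar (κ j) x))) ν :=
    integrable_finset_sum _ fun i _ => integrable_finset_sum _ fun j _ => hint i j
  exact integral_re hintsum

lemma expansion' {d : ℕ} (ν : Measure (Fin d → AddCircle (1:ℝ))) [IsFiniteMeasure ν]
    {ι : Type*} [Fintype ι] (κ : ι → (Fin d → ℤ)) (b : ι → ℂ) :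
    (∫ x, ‖∑ i, b i * torusChar (κ i) x‖ ^ 2 ∂ν) =
      (∑ i, ∑ j, b i * (starRingEnd ℂ) (b j) *
        ∫ x, torusChar (κ i) x * (starRingEnd ℂ) (torusChar (κ j) x) ∂ν).re := by
  rw [expansion ν κ b]
  congr 1
  have hint : ∀ i j : ι, Integrable (fun x =>
      b i * (starRingEnd ℂ) (b j) *
        (torusChar (κ i) x * (starRingEnd ℂ) (torusChar (κ j) x))) ν := fun i j =>
    cont_integrable ν (continuous_const.mul ((torusChar_cont (κ i)).mul
      (Complex.continuous_conj.comp (torusChar_cont (κ j)))))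
  rw [integral_finset_sum _ (fun i _ => integrable_finset_sum _ fun j _ => hint i j)]
  refine Finset.sum_congr rfl fun i _ => ?_
  rw [integral_finset_sum _ (fun j _ => hint i j)]
  exact Finset.sum_congr rfl fun j _ => integral_const_mul _ _

lemma torusChar_ortho {d : ℕ} (k l : Fin d → ℤ) :
    (∫ x : Fin d → AddCircle (1:ℝ), torusChar k x * (starRingEnd ℂ) (torusChar l x)) =
      if k = l then 1 else 0 := by
  have hpt : ∀ x : Fin d → AddCircle (1:ℝ),
      torusChar k x * (starRingEnd ℂ) (torusChar l x) = ∏ i, fourier (k i - l i) (x i) := by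
    intro x
    unfold torusChar
    rw [map_prod, ← Finset.prod_mul_distrib]
    refine Finset.prod_congr rfl fun i _ => ?_
    rw [← fourier_neg, ← fourier_add]
    simp [sub_eq_add_neg]
  simp_rw [hpt]
  rw [MeasureTheory.integral_fintype_prod_volume_eq_prod (f := fun i (y : AddCircle (1:ℝ)) =>
    (fourier (k i - l i) y : ℂ))]
  have hfac : ∀ n : ℤ, (∫ y : AddCircle (1:ℝ), (fourier n y : ℂ)) = if n = 0 then 1 else 0 := by
    intro n
    have h1 : (volume : Measure (AddCircle (1:ℝ))) = AddCircle.haarAddCircle := by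
      rw [AddCircle.volume_eq_smul_haarAddCircle, ENNReal.ofReal_one, one_smul]
    rw [h1]
    split_ifs with h
    · subst h; simp [fourier_zero]
    · have : Fact (0 < (1:ℝ)) := ⟨one_pos⟩
      exact integral_eq_zero_of_add_right_eq_neg (fourier_add_half_inv_index h one_pos)
  simp_rw [hfac]
  by_cases h : k = l
  · subst h; simp
  · rw [if_neg h]
    obtain ⟨i, hi⟩ : ∃ i, k i ≠ l i := by
      by_contra hc; push_neg at hc; exact h (funext hc)
    exact Finset.prod_eq_zero (Finset.mem_univ i) (by rw [if_neg (sub_ne_zero.mpr hi)])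

instance : IsProbabilityMeasure (volume : Measure (AddCircle (1:ℝ))) := by
  constructor
  rw [AddCircle.volume_eq_smul_haarAddCircle, ENNReal.ofReal_one, one_smul]
  exact measure_univ

instance torusVolProb {d : ℕ} : IsProbabilityMeasure (volume : Measure (Fin d → AddCircle (1:ℝ))) := by
  rw [show (volume : Measure (Fin d → AddCircle (1:ℝ))) = Measure.pi (fun _ => volume) from rfl]
  infer_instance

lemma parseval {d : ℕ} {ι : Type*} [Fintype ι] [DecidableEq ι] (κ : ι → (Fin d → ℤ))
    (hκ : Function.Injective κ) (b : ι → ℂ) :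
    (∫ x, ‖∑ i, b i * torusChar (κ i) x‖ ^ 2) = ∑ i, ‖b i‖ ^ 2 := by
  rw [expansion' volume κ b]
  have : ∀ i j : ι, (∫ x, torusChar (κ i) x * (starRingEnd ℂ) (torusChar (κ j) x))
      = if i = j then (1:ℂ) else 0 := by
    intro i j
    rw [torusChar_ortho]
    by_cases h : i = j
    · simp [h]
    · rw [if_neg h, if_neg (fun hc => h (hκ hc))]
  simp_rw [this, mul_ite, mul_one, mul_zero, Finset.sum_ite_eq, Finset.mem_univ, if_true,
    Complex.mul_conj]
  rw [Complex.re_sum]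
  refine Finset.sum_congr rfl fun i _ => ?_
  simp [Complex.sq_norm]

lemma torusChar_norm {d : ℕ} (k : Fin d → ℤ) (x : Fin d → AddCircle (1:ℝ)) :
    ‖torusChar k x‖ = 1 := by
  unfold torusChar
  rw [norm_prod]
  refine Finset.prod_eq_one fun i _ => ?_
  rw [fourier_apply]
  exact Circle.norm_coe _

lemma torusChar_mul_conj {d : ℕ} (k l : Fin d → ℤ) (x : Fin d → AddCircle (1:ℝ)) :
    torusChar k x * (starRingEnd ℂ) (torusChar l x) = torusChar (k - l) x := by
  unfold torusChar
  rw [map_prod, ← Finset.prod_mul_distrib]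
  refine Finset.prod_congr rfl fun i _ => ?_
  rw [← fourier_neg, ← fourier_add]
  simp [sub_eq_add_neg]

lemma core {d : ℕ} (μ : Measure (Fin d → AddCircle (1:ℝ))) [IsProbabilityMeasure μ]
    (hsupp : ∀ (F : Finset (Fin d → ℤ)) (c : (Fin d → ℤ) → ℂ),
      (∃ k ∈ F, c k ≠ 0) → 0 < μ {x | (∑ k ∈ F, c k * torusChar k x) ≠ 0})
    (S : Finset (Fin d → ℤ)) (hS : S.Nonempty) :
    ∃ c C : ℝ, 0 < c ∧ c ≤ C ∧ ∀ b : {k // k ∈ S} → ℂ,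
      c * (∫ x, ‖∑ i : {k // k ∈ S}, b i * torusChar i.1 x‖ ^ 2) ≤
        (∫ x, ‖∑ i : {k // k ∈ S}, b i * torusChar i.1 x‖ ^ 2 ∂μ) ∧
      (∫ x, ‖∑ i : {k // k ∈ S}, b i * torusChar i.1 x‖ ^ 2 ∂μ) ≤
        C * ∫ x, ‖∑ i : {k // k ∈ S}, b i * torusChar i.1 x‖ ^ 2 := by
  classical
  set ι := {k // k ∈ S} with hι
  set Q : (ι → ℂ) → (Fin d → AddCircle (1:ℝ)) → ℂ :=
    fun b x => ∑ i : ι, b i * torusChar i.1 x with hQ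
  have hQcont : ∀ b, Continuous (Q b) := fun b =>
    continuous_finset_sum _ fun i _ => continuous_const.mul (torusChar_cont _)
  set Fm : (ι → ℂ) → ℝ := fun b => ∫ x, ‖Q b x‖ ^ 2 ∂μ with hFm
  have hGvol : ∀ b : ι → ℂ, (∫ x, ‖Q b x‖ ^ 2) = ∑ i, ‖b i‖ ^ 2 := fun b =>
    parseval _ Subtype.val_injective b
  -- continuity of Fm
  have hcont : Continuous Fm := by
    have he : Fm = fun b : ι → ℂ => (∑ i : ι, ∑ j : ι, b i * (starRingEnd ℂ) (b j) *
        (∫ x, torusChar i.1 x * (starRingEnd ℂ) (torusChar j.1 x) ∂μ)).re :=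
      funext fun b => expansion' μ _ b
    rw [he]
    exact Complex.continuous_re.comp (continuous_finset_sum _ fun i _ =>
      continuous_finset_sum _ fun j _ =>
        (((continuous_apply i).mul ((Complex.continuous_conj.comp (continuous_apply j))))).mul
          continuous_const)
  -- positivity of Fm on nonzero b
  have hpos : ∀ b : ι → ℂ, b ≠ 0 → 0 < Fm b := by
    intro b hb
    have hbne : ∃ i : ι, b i ≠ 0 := by
      by_contra hc; push_neg at hc; exact hb (funext hc)
    obtain ⟨i₀, hi₀⟩ := hbne
    set cc : (Fin d → ℤ) → ℂ := fun k => if h : k ∈ S then b ⟨k, h⟩ else 0 with hcc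
    have hsum : ∀ x, (∑ k ∈ S, cc k * torusChar k x) = Q b x := by
      intro x
      rw [← Finset.sum_coe_sort S (fun k => cc k * torusChar k x)]
      refine Finset.sum_congr rfl fun i _ => ?_
      simp [hcc, i.2]
    have hμpos : 0 < μ {x | Q b x ≠ 0} := by
      have := hsupp S cc ⟨i₀.1, i₀.2, by simp [hcc, hi₀]⟩
      simpa [fun x => hsum x] using this
    have hinteg : Integrable (fun x => ‖Q b x‖ ^ 2) μ :=
      cont_integrable' μ (((hQcont b).norm).pow 2)
    have hsupport : Function.support (fun x => ‖Q b x‖ ^ 2) = {x | Q b x ≠ 0} := by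
      ext x
      simp [Function.mem_support, pow_eq_zero_iff, norm_eq_zero]
    rw [hFm]
    rw [integral_pos_iff_support_of_nonneg (fun x => sq_nonneg _) hinteg, hsupport]
    exact hμpos
  -- the sphere
  set Sp : Set (ι → ℂ) := {b | ∑ i, ‖b i‖ ^ 2 = 1} with hSp
  have hSpcl : IsClosed Sp :=
    isClosed_eq (continuous_finset_sum _ fun i _ =>
      ((continuous_apply i).norm).pow 2) continuous_const
  have hSpbd : Bornology.IsBounded Sp := by
    refine (Metric.isBounded_iff_subset_closedBall 0).mpr ⟨1, fun b hb => ?_⟩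
    rw [Metric.mem_closedBall, dist_zero_right]
    refine (pi_norm_le_iff_of_nonneg zero_le_one).mpr fun i => ?_
    have h1 : ‖b i‖ ^ 2 ≤ 1 := hb ▸
      Finset.single_le_sum (fun j _ => sq_nonneg ‖b j‖) (Finset.mem_univ i)
    exact (pow_le_one_iff_of_nonneg (norm_nonneg _) two_ne_zero).mp h1
  have hSpcomp : IsCompact Sp := Metric.isCompact_of_isClosed_isBounded hSpcl hSpbd
  have hSpne : Sp.Nonempty := by
    obtain ⟨k₀, hk₀⟩ := hS
    refine ⟨(Pi.single (⟨k₀, hk₀⟩ : ι) (1:ℂ) : ι → ℂ), ?_⟩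
    have : ∀ i : ι, ‖(Pi.single (⟨k₀, hk₀⟩ : ι) (1:ℂ) : ι → ℂ) i‖ ^ 2 =
        if i = ⟨k₀, hk₀⟩ then 1 else 0 := by
      intro i; by_cases h : i = ⟨k₀, hk₀⟩ <;> simp [Pi.single_apply, h]
    rw [hSp, Set.mem_setOf_eq, Finset.sum_congr rfl (fun i _ => this i)]
    rw [Finset.sum_eq_single (⟨k₀, hk₀⟩ : ι) (fun j _ hj => if_neg hj)
      (fun h => absurd (Finset.mem_univ _) h)]
    exact if_pos rfl
  obtain ⟨bmin, hbmin, hmin⟩ := hSpcomp.exists_isMinOn hSpne hcont.continuousOn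
  obtain ⟨bmax, hbmax, hmax⟩ := hSpcomp.exists_isMaxOn hSpne hcont.continuousOn
  have hbminne : bmin ≠ 0 := by
    intro h
    rw [h] at hbmin
    simp [hSp] at hbmin
  refine ⟨Fm bmin, Fm bmax, hpos bmin hbminne, hmin hbmax, ?_⟩
  intro b
  by_cases hb0 : b = 0
  · subst hb0
    have : Q 0 = fun _ => 0 := by funext x; simp [hQ]
    simp [hFm, this]
  · -- scaling
    set t : ℝ := Real.sqrt (∑ i, ‖b i‖ ^ 2) with ht
    have hsumpos : 0 < ∑ i, ‖b i‖ ^ 2 := by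
      obtain ⟨i, hi⟩ : ∃ i : ι, b i ≠ 0 := by
        by_contra hc; push_neg at hc; exact hb0 (funext hc)
      exact Finset.sum_pos' (fun i _ => sq_nonneg _) ⟨i, Finset.mem_univ i, pow_pos (norm_pos_iff.mpr hi) 2⟩
    have htpos : 0 < t := Real.sqrt_pos.mpr hsumpos
    have ht2 : t ^ 2 = ∑ i, ‖b i‖ ^ 2 := Real.sq_sqrt hsumpos.le
    set b' : ι → ℂ := fun i => (t : ℂ)⁻¹ * b i with hb'
    have hQb' : ∀ x, Q b' x = (t : ℂ)⁻¹ * Q b x := by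
      intro x
      rw [hQ, Finset.mul_sum]
      exact Finset.sum_congr rfl fun i _ => by rw [hb']; ring
    have hnorm : ∀ x, ‖Q b' x‖ ^ 2 = (t ^ 2)⁻¹ * ‖Q b x‖ ^ 2 := by
      intro x
      rw [hQb', norm_mul, mul_pow, norm_inv, Complex.norm_real, Real.norm_of_nonneg htpos.le,
        inv_pow]
    have hb'sum : ∑ i, ‖b' i‖ ^ 2 = 1 := by
      have : ∀ i : ι, ‖b' i‖ ^ 2 = (t ^ 2)⁻¹ * ‖b i‖ ^ 2 := by
        intro i
        rw [hb', norm_mul, mul_pow, norm_inv, Complex.norm_real, Real.norm_of_nonneg htpos.le,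
          inv_pow]
      rw [Finset.sum_congr rfl (fun i _ => this i), ← Finset.mul_sum, ← ht2]
      field_simp
    have hb'Sp : b' ∈ Sp := hb'sum
    have hFmb' : Fm b = t ^ 2 * Fm b' := by
      rw [hFm]
      simp_rw [fun x => hnorm x]
      rw [integral_const_mul]
      field_simp
    have hGb : (∫ x, ‖Q b x‖ ^ 2) = t ^ 2 := by rw [hGvol, ht2]
    have hgoal1 : (∫ x, ‖∑ i : {k // k ∈ S}, b i * torusChar i.1 x‖ ^ 2 ∂μ) = Fm b := rfl
    have hgoal2 : (∫ x, ‖∑ i : {k // k ∈ S}, b i * torusChar i.1 x‖ ^ 2)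
        = ∫ x, ‖Q b x‖ ^ 2 := rfl
    rw [hgoal1, hgoal2]
    constructor
    · rw [hGb, hFmb']
      have h1 : Fm bmin ≤ Fm b' := hmin hb'Sp
      calc Fm bmin * t ^ 2 ≤ Fm b' * t ^ 2 := mul_le_mul_of_nonneg_right h1 (sq_nonneg t)
        _ = t ^ 2 * Fm b' := mul_comm _ _
    · rw [hGb, hFmb']
      have h1 : Fm b' ≤ Fm bmax := hmax hb'Sp
      calc t ^ 2 * Fm b' ≤ t ^ 2 * Fm bmax := mul_le_mul_of_nonneg_left h1 (sq_nonneg t)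
        _ = Fm bmax * t ^ 2 := mul_comm _ _

/-- If the support of `μ` is not contained in the zero set of any nonzero trigonometric
polynomial, then for every `r > 0` the norms `‖u‖_{L²(dμ)}` and `‖u‖_{L²(dx)}` are
uniformly comparable over trigonometric polynomials whose Fourier support has diameter
at most `r`. -/
theorem stmt_11 {d : ℕ} (μ : Measure (Fin d → AddCircle (1:ℝ))) [IsProbabilityMeasure μ]
    (hsupp : ∀ (F : Finset (Fin d → ℤ)) (c : (Fin d → ℤ) → ℂ),
      (∃ k ∈ F, c k ≠ 0) → 0 < μ {x | (∑ k ∈ F, c k * torusChar k x) ≠ 0})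
    (r : ℝ) (hr : 0 < r) :
    ∃ c C : ℝ, 0 < c ∧ c ≤ C ∧
      ∀ (F : Finset (Fin d → ℤ)) (a : (Fin d → ℤ) → ℂ),
        (∀ k ∈ F, ∀ l ∈ F, a k ≠ 0 → a l ≠ 0 → ‖(k - l : Fin d → ℤ)‖ ≤ r) →
        c * ∫ x, ‖∑ k ∈ F, a k * torusChar k x‖ ^ 2 ≤
            (∫ x, ‖∑ k ∈ F, a k * torusChar k x‖ ^ 2 ∂μ) ∧
          (∫ x, ‖∑ k ∈ F, a k * torusChar k x‖ ^ 2 ∂μ) ≤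
            C * ∫ x, ‖∑ k ∈ F, a k * torusChar k x‖ ^ 2 := by
  classical
  set N : ℕ := ⌈r⌉₊ with hN
  have hrN : r ≤ (N : ℝ) := Nat.le_ceil r
  set S : Finset (Fin d → ℤ) := Finset.Icc (fun _ => -(N:ℤ)) (fun _ => (N:ℤ)) with hS
  have hSne : S.Nonempty := by
    refine ⟨fun _ => 0, ?_⟩
    rw [hS, Finset.mem_Icc]
    constructor <;> intro i <;> simp
  obtain ⟨c, C, hc, hcC, hmain⟩ := core μ hsupp S hSne
  refine ⟨c, C, hc, hcC, ?_⟩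
  intro F a hdiam
  set F' : Finset (Fin d → ℤ) := F.filter (fun k => a k ≠ 0) with hF'
  have hu : ∀ x, (∑ k ∈ F, a k * torusChar k x) = ∑ k ∈ F', a k * torusChar k x := by
    intro x
    rw [hF', Finset.sum_filter_of_ne]
    intro k _ h hak
    exact h (by rw [hak, zero_mul])
  by_cases hF'e : F' = ∅
  · have hzero : ∀ x, (∑ k ∈ F, a k * torusChar k x) = 0 := by
      intro x; rw [hu x, hF'e, Finset.sum_empty]
    simp_rw [fun x => hzero x]
    simp [hc.le, mul_nonneg hc.le]
  · obtain ⟨k₀, hk₀⟩ := Finset.nonempty_iff_ne_empty.mpr hF'e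
    have hak₀ : a k₀ ≠ 0 := (Finset.mem_filter.mp hk₀).2
    have hk₀F : k₀ ∈ F := (Finset.mem_filter.mp hk₀).1
    set b : {k // k ∈ S} → ℂ := fun i => if i.1 + k₀ ∈ F' then a (i.1 + k₀) else 0 with hb
    set T : Finset (Fin d → ℤ) := S.filter (fun k => k + k₀ ∈ F') with hT
    have hTim : T = F'.image (fun k => k - k₀) := by
      ext j
      rw [hT, Finset.mem_filter, Finset.mem_image]
      constructor
      · rintro ⟨-, hj⟩
        exact ⟨j + k₀, hj, by abel⟩
      · rintro ⟨k, hk, rfl⟩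
        have hkF : k ∈ F := (Finset.mem_filter.mp hk).1
        have hakk : a k ≠ 0 := (Finset.mem_filter.mp hk).2
        have hd : ‖(k - k₀ : Fin d → ℤ)‖ ≤ r := hdiam k hkF k₀ hk₀F hakk hak₀
        constructor
        · rw [hS, Finset.mem_Icc]
          constructor <;> intro i <;>
          · have h1 : ‖(k - k₀ : Fin d → ℤ) i‖ ≤ r := le_trans (norm_le_pi_norm _ i) hd
            have h2 : |((k i - k₀ i : ℤ) : ℝ)| ≤ (N : ℝ) := by
              rw [show ((k - k₀ : Fin d → ℤ) i) = k i - k₀ i from rfl] at h1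
              calc |((k i - k₀ i : ℤ) : ℝ)| = ‖(k i - k₀ i : ℤ)‖ := (Int.norm_cast_real _).symm
                _ ≤ (N:ℝ) := le_trans h1 hrN
            have h3 : |k i - k₀ i| ≤ (N : ℤ) := by exact_mod_cast h2
            have := abs_le.mp h3
            simp only [Pi.sub_apply] at this ⊢
            omega
        · rwa [show k - k₀ + k₀ = k by abel]
    have hkey : ∀ x, ‖∑ k ∈ F, a k * torusChar k x‖ =
        ‖∑ i : {k // k ∈ S}, b i * torusChar i.1 x‖ := by
      intro x
      have h1 : (∑ i : {k // k ∈ S}, b i * torusChar i.1 x)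
          = ∑ k ∈ S, (if k + k₀ ∈ F' then a (k + k₀) else 0) * torusChar k x := by
        rw [← Finset.sum_coe_sort S (fun k => (if k + k₀ ∈ F' then a (k + k₀) else 0) *
          torusChar k x)]
      have h2 : (∑ k ∈ S, (if k + k₀ ∈ F' then a (k + k₀) else 0) * torusChar k x)
          = ∑ k ∈ T, a (k + k₀) * torusChar k x := by
        rw [hT, Finset.sum_filter]
        exact Finset.sum_congr rfl fun k _ => by rw [ite_mul, zero_mul]
      have h3 : (∑ k ∈ T, a (k + k₀) * torusChar k x)
          = ∑ k ∈ F', a k * torusChar (k - k₀) x := by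
        rw [hTim, Finset.sum_image (fun k _ l _ h => by
          have := congrArg (· + k₀) h; simpa [sub_add_cancel] using this)]
        exact Finset.sum_congr rfl fun k _ => by rw [show k - k₀ + k₀ = k by abel]
      have h4 : (∑ k ∈ F', a k * torusChar (k - k₀) x)
          = (∑ k ∈ F', a k * torusChar k x) * (starRingEnd ℂ) (torusChar k₀ x) := by
        rw [Finset.sum_mul]
        exact Finset.sum_congr rfl fun k _ => by
          rw [← torusChar_mul_conj k k₀ x]; ring
      rw [h1, h2, h3, h4, hu x, norm_mul, RCLike.norm_conj, torusChar_norm, mul_one]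
    have hkey2 : ∀ {ν : Measure (Fin d → AddCircle (1:ℝ))},
        (∫ x, ‖∑ k ∈ F, a k * torusChar k x‖ ^ 2 ∂ν)
          = ∫ x, ‖∑ i : {k // k ∈ S}, b i * torusChar i.1 x‖ ^ 2 ∂ν := by
      intro ν
      exact integral_congr_ae (Filter.Eventually.of_forall fun x => congrArg (· ^ 2) (hkey x))
    rw [hkey2, hkey2]
    exact hmain b
end

section
/- For n ≥ 3, let h_n = 1/(n (ln n)²) and define a strictly decreasing sequence (a_n) with a_{n-1} - a_n = 2h_n and a_n → 0, and let A = ∪_{n≥3} (a_n, a_n + h_n) ⊂ (0,3). Then for every ε > 0 the characteristic function 𝟙_A does not belong to W^{ε,1}(0,3): its Gagliardo seminorm ∫₀³∫₀³ |𝟙_A(x) - 𝟙_A(y)|/|x-y|^{1+ε} dx dy is infinite. -/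
open MeasureTheory Real Set Filter

-- positivity of h
lemma stmt15_hpos (h : ℕ → ℝ) (hh : ∀ n : ℕ, h n = 1 / (n * (Real.log n) ^ 2)) :
    ∀ k : ℕ, 3 ≤ k → 0 < h k := by
  intro k hk
  have hk1 : (1:ℝ) < (k:ℝ) := by exact_mod_cast Nat.lt_of_lt_of_le (by norm_num) hk
  have hlog : 0 < Real.log k := Real.log_pos hk1
  rw [hh]
  positivity

-- h ≤ 1
lemma stmt15_hle1 (h : ℕ → ℝ) (hh : ∀ n : ℕ, h n = 1 / (n * (Real.log n) ^ 2)) :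
    ∀ k : ℕ, 3 ≤ k → h k ≤ 1 := by
  intro k hk
  have hk1 : (3:ℝ) ≤ (k:ℝ) := by exact_mod_cast hk
  have hlog : 1 ≤ Real.log k := by
    rw [Real.le_log_iff_exp_le (by linarith)]
    have := Real.exp_one_lt_d9
    linarith
  rw [hh]
  rw [div_le_one (by nlinarith)]
  nlinarith

-- non-summability
lemma stmt15_not_summable (h : ℕ → ℝ) (hh : ∀ n : ℕ, h n = 1 / (n * (Real.log n) ^ 2))
    (ε : ℝ) (hε : 0 < ε) : ¬ Summable (fun n : ℕ => h (n + 4) ^ (1 - ε)) := by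
  have hpos := stmt15_hpos h hh
  rcases le_or_gt 1 ε with hε1 | hε1
  · -- ε ≥ 1 : terms are ≥ 1
    intro hs
    have h1 : ∀ n : ℕ, (1:ℝ) ≤ h (n + 4) ^ (1 - ε) := by
      intro n
      exact Real.one_le_rpow_of_pos_of_le_one_of_nonpos
        (hpos _ (by omega)) (stmt15_hle1 h hh _ (by omega)) (by linarith)
    have := ge_of_tendsto hs.tendsto_atTop_zero (Filter.Eventually.of_forall h1)
    linarith
  · -- ε < 1
    set δ : ℝ := (ε/2) / (1 - ε) with hδdef
    have h1ε : 0 < 1 - ε := by linarith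
    have hδ : 0 < δ := div_pos (by linarith) h1ε
    set s : ℝ := 1 - ε/2 with hsdef
    -- eventually (log x)^2 ≤ x^δ
    have hlo := (isLittleO_log_rpow_rpow_atTop (2:ℝ) hδ).bound one_pos
    have hev : ∀ᶠ x : ℝ in atTop, Real.log x ^ (2:ℕ) ≤ x ^ δ := by
      filter_upwards [hlo, eventually_ge_atTop (1:ℝ)] with x hx hx1
      have hlx : 0 ≤ Real.log x := Real.log_nonneg hx1
      have hxδ : 0 ≤ x ^ δ := Real.rpow_nonneg (by linarith) δ
      have : Real.log x ^ (2:ℝ) ≤ x ^ δ := by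
        rw [one_mul] at hx
        calc Real.log x ^ (2:ℝ) ≤ ‖Real.log x ^ (2:ℝ)‖ := le_abs_self _
        _ ≤ ‖x ^ δ‖ := hx
        _ = x ^ δ := abs_of_nonneg hxδ
      rwa [Real.rpow_two] at this
    have hevN : ∀ᶠ k : ℕ in atTop, Real.log (k:ℝ) ^ (2:ℕ) ≤ (k:ℝ) ^ δ :=
      tendsto_natCast_atTop_atTop.eventually hev
    obtain ⟨N, hN⟩ := eventually_atTop.mp hevN
    intro hs'
    have hs2 : Summable (fun n : ℕ => h (n + N + 4) ^ (1 - ε)) :=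
      (summable_nat_add_iff (f := fun n : ℕ => h (n + 4) ^ (1 - ε)) N).mpr hs'
    have hbound : ∀ n : ℕ, ((n + N + 4 : ℕ) : ℝ) ^ (-s) ≤ h (n + N + 4) ^ (1 - ε) := by
      intro n
      set k : ℕ := n + N + 4 with hkdef
      have hk3 : 3 ≤ k := by omega
      have hkR : (3:ℝ) ≤ (k:ℝ) := by exact_mod_cast hk3
      have hkpos : (0:ℝ) < (k:ℝ) := by linarith
      have hlogk := hN k (by omega)
      have hkrp : (k:ℝ) ^ (-(1 + δ)) ≤ h k := by
        rw [hh]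
        have hA : (0:ℝ) < (k:ℝ) * Real.log k ^ 2 := by
          have : (1:ℝ) < (k:ℝ) := by linarith
          have := Real.log_pos this
          positivity
        have hB : (k:ℝ) * Real.log k ^ 2 ≤ (k:ℝ) ^ (1 + δ) := by
          have : (k:ℝ) ^ (1 + δ) = (k:ℝ) * (k:ℝ) ^ δ := by
            rw [Real.rpow_add hkpos, Real.rpow_one]
          rw [this]
          have := mul_le_mul_of_nonneg_left hlogk (le_of_lt hkpos)
          simpa using this
        calc (k:ℝ) ^ (-(1 + δ)) = 1 / (k:ℝ) ^ (1 + δ) := by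
              rw [Real.rpow_neg (le_of_lt hkpos), one_div]
        _ ≤ 1 / ((k:ℝ) * Real.log k ^ 2) := one_div_le_one_div_of_le hA hB
      have h2 : ((k:ℝ) ^ (-(1 + δ))) ^ (1 - ε) ≤ h k ^ (1 - ε) :=
        Real.rpow_le_rpow (Real.rpow_nonneg (le_of_lt hkpos) _) hkrp (le_of_lt h1ε)
      have h3 : ((k:ℝ) ^ (-(1 + δ))) ^ (1 - ε) = (k:ℝ) ^ (-s) := by
        rw [← Real.rpow_mul (le_of_lt hkpos)]
        congr 1
        have hδε : δ * (1 - ε) = ε / 2 := by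
          rw [hδdef]; field_simp
        rw [hsdef]; linear_combination -hδε
      rwa [h3] at h2
    have hs3 : Summable (fun n : ℕ => ((n + N + 4 : ℕ) : ℝ) ^ (-s)) :=
      Summable.of_nonneg_of_le (fun n => Real.rpow_nonneg (by positivity) _) hbound hs2
    have hs4 : Summable (fun n : ℕ => ((n : ℕ) : ℝ) ^ (-s)) := by
      have := (summable_nat_add_iff (f := fun n : ℕ => ((n:ℕ) : ℝ) ^ (-s)) (N + 4)).mp
      apply this
      refine hs3.congr fun n => ?_
      rw [add_assoc]
    have := Real.summable_nat_rpow.mp hs4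
    rw [hsdef] at this
    linarith



/-- With `h_n = 1/(n (ln n)²)` and a decreasing sequence `a_n → 0` with
`a_{n-1} - a_n = 2h_n`, the set `A = ⋃_{n≥3} (a_n, a_n + h_n) ⊂ (0,3)` has infinite
Gagliardo `W^{ε,1}` seminorm on `(0,3)` for every `ε > 0`. -/
theorem stmt_15 (h a : ℕ → ℝ)
    (hh : ∀ n : ℕ, h n = 1 / (n * (Real.log n) ^ 2))
    (ha : ∀ n : ℕ, 4 ≤ n → a (n - 1) - a n = 2 * h n)
    (hlim : Filter.Tendsto a Filter.atTop (nhds 0))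
    (hA : (⋃ n : ℕ, ⋃ (_ : 3 ≤ n), Set.Ioo (a n) (a n + h n)) ⊆ Set.Ioo (0:ℝ) 3)
    (ε : ℝ) (hε : 0 < ε) :
    (∫⁻ x in Set.Ioo (0:ℝ) 3, ∫⁻ y in Set.Ioo (0:ℝ) 3,
      ENNReal.ofReal
        (|Set.indicator (⋃ n : ℕ, ⋃ (_ : 3 ≤ n), Set.Ioo (a n) (a n + h n))
              (fun _ => (1:ℝ)) x -
            Set.indicator (⋃ n : ℕ, ⋃ (_ : 3 ≤ n), Set.Ioo (a n) (a n + h n))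
              (fun _ => (1:ℝ)) y| / |x - y| ^ (1 + ε))) = ⊤ := by
  set A := (⋃ n : ℕ, ⋃ (_ : 3 ≤ n), Set.Ioo (a n) (a n + h n)) with hAdef
  have hpos := stmt15_hpos h hh
  have hIA : ∀ k : ℕ, 3 ≤ k → Set.Ioo (a k) (a k + h k) ⊆ A := by
    intro k hk
    rw [hAdef]
    exact Set.subset_iUnion₂ (s := fun n (_ : 3 ≤ n) => Set.Ioo (a n) (a n + h n)) k hk
  have hI3 : ∀ k : ℕ, 3 ≤ k → Set.Ioo (a k) (a k + h k) ⊆ Set.Ioo (0:ℝ) 3 :=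
    fun k hk => (hIA k hk).trans hA
  have hub : ∀ k : ℕ, 3 ≤ k → a k + h k ≤ 3 := by
    intro k hk
    by_contra hcon
    push_neg at hcon
    have hp := hpos k hk
    have hmax : max (a k) 3 < a k + h k := max_lt (by linarith) hcon
    have h1 := le_max_left (a k) 3
    have h2 := le_max_right (a k) 3
    have hmem : (max (a k) 3 + (a k + h k)) / 2 ∈ Set.Ioo (a k) (a k + h k) :=
      ⟨by linarith, by linarith⟩
    have := (hI3 k hk hmem).2
    linarith
  have hlb : ∀ k : ℕ, 3 ≤ k → 0 ≤ a k := by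
    intro k hk
    by_contra hcon
    push_neg at hcon
    have hp := hpos k hk
    have hmin : a k < min (a k + h k) 0 := lt_min (by linarith) hcon
    have h1 := min_le_left (a k + h k) 0
    have h2 := min_le_right (a k + h k) 0
    have hmem : (a k + min (a k + h k) 0) / 2 ∈ Set.Ioo (a k) (a k + h k) :=
      ⟨by linarith, by linarith⟩
    have := (hI3 k hk hmem).1
    linarith
  have hmono : ∀ m n : ℕ, 3 ≤ m → m ≤ n → a n ≤ a m := by
    intro m n hm hmn
    induction n with
    | zero => omega
    | succ n ih =>
      rcases Nat.lt_or_ge m (n+1) with hlt | hge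
      · have h1 : a (n+1) ≤ a n := by
          have hstep := ha (n+1) (by omega)
          have hp := hpos (n+1) (by omega)
          simp only [Nat.add_sub_cancel] at hstep
          linarith
        exact le_trans h1 (ih (by omega))
      · have : m = n + 1 := by omega
        rw [this]
  have hstep : ∀ k : ℕ, 4 ≤ k → a (k-1) = a k + 2 * h k := by
    intro k hk; have := ha k hk; linarith
  have hGA : ∀ n : ℕ, ∀ y ∈ Set.Ioo (a (n+4) + h (n+4)) (a (n+4) + 2 * h (n+4)), y ∉ A := by
    intro n y hy hmem
    rw [hAdef] at hmem
    simp only [Set.mem_iUnion] at hmem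
    obtain ⟨m, hm3, hym⟩ := hmem
    have hstep4 : a (n+3) = a (n+4) + 2 * h (n+4) := by
      have := hstep (n+4) (by omega); simpa using this
    rcases Nat.lt_or_ge m (n+4) with hlt | hge
    · have hq : a (n+3) ≤ a m := hmono m (n+3) hm3 (by omega)
      have := hym.1
      have := hy.2
      linarith
    · rcases Nat.eq_or_lt_of_le hge with heq | hlt'
      · rw [← heq] at hym
        have := hym.2
        have := hy.1
        linarith
      · have hstepm : a (m-1) = a m + 2 * h m := hstep m (by omega)
        have h1 : a (m-1) ≤ a (n+4) := hmono (n+4) (m-1) (by omega) (by omega)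
        have hpm := hpos m (by omega)
        have hp4 := hpos (n+4) (by omega)
        have := hym.2
        have := hy.1
        linarith
  have hdisj : Pairwise (Function.onFun Disjoint
      (fun n : ℕ => Set.Ioo (a (n+4)) (a (n+4) + h (n+4)))) := by
    have key : ∀ i j : ℕ, i < j → Disjoint (Set.Ioo (a (i+4)) (a (i+4) + h (i+4)))
        (Set.Ioo (a (j+4)) (a (j+4) + h (j+4))) := by
      intro i j hij
      rw [Set.Ioo_disjoint_Ioo]
      have hstepj : a (j+3) = a (j+4) + 2 * h (j+4) := by
        simpa using hstep (j+4) (by omega)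
      have h2 : a (j+3) ≤ a (i+4) := hmono (i+4) (j+3) (by omega) (by omega)
      have hpj := hpos (j+4) (by omega)
      calc min (a (i+4) + h (i+4)) (a (j+4) + h (j+4)) ≤ a (j+4) + h (j+4) :=
            min_le_right _ _
        _ ≤ a (i+4) := by linarith
        _ ≤ max (a (i+4)) (a (j+4)) := le_max_left _ _
    intro i j hij
    rcases hij.lt_or_gt with hlt | hlt
    · exact key i j hlt
    · exact (key j i hlt).symm
  -- the per-rectangle lower bound
  have key : ∀ n : ℕ,
      ENNReal.ofReal ((2:ℝ) ^ (-(1+ε)) * h (n+4) ^ (1 - ε)) ≤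
      ∫⁻ x in Set.Ioo (a (n+4)) (a (n+4) + h (n+4)),
        ∫⁻ y in Set.Ioo (0:ℝ) 3,
          ENNReal.ofReal
            (|A.indicator (fun _ => (1:ℝ)) x - A.indicator (fun _ => (1:ℝ)) y| /
              |x - y| ^ (1 + ε)) := by
    intro n
    have hk3 : 3 ≤ n + 4 := by omega
    have hp := hpos (n+4) hk3
    have hsubG : Set.Ioo (a (n+4) + h (n+4)) (a (n+4) + 2 * h (n+4)) ⊆ Set.Ioo (0:ℝ) 3 := by
      intro y hy
      have hy1 := hy.1
      have hy2 := hy.2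
      have hlb' := hlb (n+4) hk3
      have hstepk : a (n+3) = a (n+4) + 2 * h (n+4) := by
        simpa using hstep (n+4) (by omega)
      have hub' := hub (n+3) (by omega)
      have hpk1 := hpos (n+3) (by omega)
      exact ⟨by linarith, by linarith⟩
    have inner : ∀ x ∈ Set.Ioo (a (n+4)) (a (n+4) + h (n+4)),
        ENNReal.ofReal ((2 * h (n+4)) ^ (-(1+ε))) * ENNReal.ofReal (h (n+4)) ≤
        ∫⁻ y in Set.Ioo (0:ℝ) 3,
          ENNReal.ofReal
            (|A.indicator (fun _ => (1:ℝ)) x - A.indicator (fun _ => (1:ℝ)) y| /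
              |x - y| ^ (1 + ε)) := by
      intro x hx
      have hxA : x ∈ A := hIA (n+4) hk3 hx
      calc ENNReal.ofReal ((2 * h (n+4)) ^ (-(1+ε))) * ENNReal.ofReal (h (n+4))
          = ∫⁻ _ in Set.Ioo (a (n+4) + h (n+4)) (a (n+4) + 2 * h (n+4)),
              ENNReal.ofReal ((2 * h (n+4)) ^ (-(1+ε))) := by
            rw [setLIntegral_const, Real.volume_Ioo]
            congr 2
            ring
        _ ≤ ∫⁻ y in Set.Ioo (a (n+4) + h (n+4)) (a (n+4) + 2 * h (n+4)),
              ENNReal.ofReal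
                (|A.indicator (fun _ => (1:ℝ)) x - A.indicator (fun _ => (1:ℝ)) y| /
                  |x - y| ^ (1 + ε)) := by
            apply setLIntegral_mono' measurableSet_Ioo
            intro y hy
            have hyA : y ∉ A := hGA n y hy
            rw [Set.indicator_of_mem hxA, Set.indicator_of_notMem hyA]
            apply ENNReal.ofReal_le_ofReal
            have hxy : 0 < y - x := by
              have := hx.2; have := hy.1; linarith
            have habs : |x - y| = y - x := by
              rw [abs_sub_comm]; exact abs_of_pos hxy
            have hle : |x - y| ≤ 2 * h (n+4) := by
              rw [habs]; have := hx.1; have := hy.2; linarith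
            have h0 : 0 < |x - y| := by rw [habs]; exact hxy
            have h1 : |x - y| ^ (1+ε) ≤ (2 * h (n+4)) ^ (1+ε) :=
              Real.rpow_le_rpow (abs_nonneg _) hle (by linarith)
            have h2 : 0 < |x - y| ^ (1+ε) := Real.rpow_pos_of_pos h0 _
            rw [Real.rpow_neg (by positivity), ← one_div]
            simp only [sub_zero, abs_one]
            exact one_div_le_one_div_of_le h2 h1
        _ ≤ ∫⁻ y in Set.Ioo (0:ℝ) 3,
              ENNReal.ofReal
                (|A.indicator (fun _ => (1:ℝ)) x - A.indicator (fun _ => (1:ℝ)) y| /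
                  |x - y| ^ (1 + ε)) := lintegral_mono_set hsubG
    calc ENNReal.ofReal ((2:ℝ) ^ (-(1+ε)) * h (n+4) ^ (1 - ε))
        = ENNReal.ofReal ((2 * h (n+4)) ^ (-(1+ε))) * ENNReal.ofReal (h (n+4)) *
            ENNReal.ofReal (h (n+4)) := by
          rw [← ENNReal.ofReal_mul (by positivity), ← ENNReal.ofReal_mul (by positivity)]
          congr 1
          have e1 : h (n+4) * h (n+4) = h (n+4) ^ ((2:ℕ):ℝ) := by
            rw [Real.rpow_natCast]; ring
          have e2 : (2 * h (n+4)) ^ (-(1+ε)) = 2 ^ (-(1+ε)) * h (n+4) ^ (-(1+ε)) :=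
            Real.mul_rpow (by norm_num) hp.le
          have e4 : (2:ℝ) ^ (-(1+ε)) * h (n+4) ^ (-(1+ε)) * h (n+4) * h (n+4)
              = 2 ^ (-(1+ε)) * (h (n+4) ^ (-(1+ε)) * (h (n+4) * h (n+4))) := by ring
          have e3 : h (n+4) ^ (-(1+ε)) * (h (n+4) * h (n+4)) = h (n+4) ^ (1 - ε) := by
            rw [e1, ← Real.rpow_add hp]
            congr 1
            push_cast
            ring
          rw [e2, e4, e3]
      _ = ∫⁻ _ in Set.Ioo (a (n+4)) (a (n+4) + h (n+4)),
            (ENNReal.ofReal ((2 * h (n+4)) ^ (-(1+ε))) * ENNReal.ofReal (h (n+4))) := by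
          rw [setLIntegral_const, Real.volume_Ioo, add_sub_cancel_left]
      _ ≤ _ := setLIntegral_mono' measurableSet_Ioo inner
  -- tsum is infinite
  have htop : ∑' n : ℕ, ENNReal.ofReal ((2:ℝ) ^ (-(1+ε)) * h (n+4) ^ (1 - ε)) = ⊤ := by
    by_contra hne
    have hsum : Summable (fun n : ℕ => ((2:ℝ) ^ (-(1+ε)) * h (n+4) ^ (1 - ε)).toNNReal) := by
      apply ENNReal.tsum_coe_ne_top_iff_summable.mp
      simpa [ENNReal.ofReal] using hne
    have hnonneg : ∀ n : ℕ, 0 ≤ (2:ℝ) ^ (-(1+ε)) * h (n+4) ^ (1 - ε) := fun n =>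
      mul_nonneg (Real.rpow_nonneg (by norm_num) _)
        (Real.rpow_nonneg (hpos _ (by omega)).le _)
    have hsumR : Summable (fun n : ℕ => (2:ℝ) ^ (-(1+ε)) * h (n+4) ^ (1 - ε)) := by
      have := NNReal.summable_coe.mpr hsum
      refine this.congr fun n => ?_
      exact Real.coe_toNNReal _ (hnonneg n)
    have := (summable_mul_left_iff
      (ne_of_gt (Real.rpow_pos_of_pos (by norm_num : (0:ℝ) < 2) (-(1+ε))))).mp hsumR
    exact stmt15_not_summable h hh ε hε this
  rw [eq_top_iff, ← htop]
  calc ∑' n : ℕ, ENNReal.ofReal ((2:ℝ) ^ (-(1+ε)) * h (n+4) ^ (1 - ε))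
      ≤ ∑' n : ℕ, ∫⁻ x in Set.Ioo (a (n+4)) (a (n+4) + h (n+4)),
          ∫⁻ y in Set.Ioo (0:ℝ) 3,
            ENNReal.ofReal
              (|A.indicator (fun _ => (1:ℝ)) x - A.indicator (fun _ => (1:ℝ)) y| /
                |x - y| ^ (1 + ε)) := ENNReal.tsum_le_tsum key
    _ = ∫⁻ x in ⋃ n : ℕ, Set.Ioo (a (n+4)) (a (n+4) + h (n+4)),
          ∫⁻ y in Set.Ioo (0:ℝ) 3,
            ENNReal.ofReal
              (|A.indicator (fun _ => (1:ℝ)) x - A.indicator (fun _ => (1:ℝ)) y| /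
                |x - y| ^ (1 + ε)) :=
        (lintegral_iUnion (fun _ => measurableSet_Ioo) hdisj _).symm
    _ ≤ ∫⁻ x in Set.Ioo (0:ℝ) 3,
          ∫⁻ y in Set.Ioo (0:ℝ) 3,
            ENNReal.ofReal
              (|A.indicator (fun _ => (1:ℝ)) x - A.indicator (fun _ => (1:ℝ)) y| /
                |x - y| ^ (1 + ε)) :=
        lintegral_mono_set (Set.iUnion_subset fun n => hI3 (n+4) (by omega))
end
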